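/- Consider the implicit vector recursion d(k) = T_k ⊗ G₀ᵀ ⊗ d(k) ⊕ T_k ⊗ d(k−1) ⊕ T_k ⊗ Σ_{m=1}^{M} G_mᵀ ⊗ d(k−m) over the max-plus semiring, where T_k is a diagonal matrix with real (non-ε) diagonal entries and the graph associated with G₀ is acyclic with longest path length p. Then the recursion is solvable explicitly as d(k) = Σ_{m=1}^{M} T_m(k) ⊗ d(k−m), with T₁(k) = (E ⊕ T_k ⊗ G₀ᵀ)^p ⊗ T_k ⊗ (E ⊕ G₁ᵀ) and T_m(k) = (E ⊕ T_k ⊗ G₀ᵀ)^p ⊗ T_k ⊗ G_mᵀ for m = 2,…,M; i.e., any vector d(k) with real entries satisfies the implicit equation iff it equals this explicit expression. -/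

import Mathlib

/-- The max-plus carrier `ℝ ∪ {-∞}` (order-dualized so that tropical `min` becomes `max`). -/
noncomputable instance : LinearOrderedAddCommMonoidWithTop (OrderDual (WithBot ℝ)) where
  __ := (inferInstance : LinearOrder (OrderDual (WithBot ℝ)))
  __ := (inferInstance : AddCommMonoid (OrderDual (WithBot ℝ)))
  __ := (inferInstance : IsOrderedAddMonoid (OrderDual (WithBot ℝ)))
  __ := (inferInstance : OrderTop (OrderDual (WithBot ℝ)))
  top_add' x := WithBot.bot_add (OrderDual.ofDual x)
  isAddLeftRegular_of_ne_top x hx := fun _ _ h =>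
    WithBot.add_left_cancel (x := OrderDual.ofDual x) hx h

/-- The max-plus semiring `⟨ℝ ∪ {-∞}, ⊕ = max, ⊗ = +⟩`; its semiring addition `+` is `max`,
its semiring multiplication `*` is real addition, and its zero `0` is `ε = -∞`. -/
abbrev MaxPlus : Type := Tropical (OrderDual (WithBot ℝ))

/-- `HasWalk X q i j` : there is a walk of length `q` from `i` to `j` in the directed
graph associated with `X` (arc `(i,j)` iff `X i j ≠ ε`). -/
def HasWalk {n : ℕ} (X : Matrix (Fin n) (Fin n) MaxPlus) (q : ℕ) (i j : Fin n) : Prop :=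
  ∃ f : Fin (q + 1) → Fin n, f 0 = i ∧ f (Fin.last q) = j ∧
    ∀ t : Fin q, X (f t.castSucc) (f t.succ) ≠ 0

section aux

variable {n : ℕ}

lemma matAddSelf (A : Matrix (Fin n) (Fin n) MaxPlus) : A + A = A := by
  ext i j; exact Tropical.add_self (R := OrderDual (WithBot ℝ)) _

/-- Idempotent geometric identity: `(1 + U)^p = Σ_{q=0}^p U^q`. -/
lemma maxplus_geom (U : Matrix (Fin n) (Fin n) MaxPlus) (p : ℕ) :
    (1 + U) ^ p = ∑ q ∈ Finset.range (p + 1), U ^ q := by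
  induction p with
  | zero => simp
  | succ p ih =>
    rw [pow_succ, ih, mul_add, mul_one, Finset.sum_mul]
    have h1 : ∀ q : ℕ, U ^ q * U = U ^ (q + 1) := fun q => (pow_succ U q).symm
    simp only [h1]
    rw [Finset.sum_range_succ' (fun q => U ^ q) (p + 1)]
    rw [Finset.sum_range_succ' (fun q => U ^ q) p]
    rw [Finset.sum_range_succ (fun q => U ^ (q + 1)) p]
    simp only [pow_zero]
    set A := ∑ q ∈ Finset.range p, U ^ (q + 1) with hA
    -- goal : A + 1 + (A + U ^ (p + 1)) = A + U ^ (p + 1) + 1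
    calc A + 1 + (A + U ^ (p + 1)) = (A + A) + U ^ (p + 1) + 1 := by ac_rfl
      _ = A + U ^ (p + 1) + 1 := by rw [matAddSelf]

lemma mulVec_sum {ι : Type*} (A : Matrix (Fin n) (Fin n) MaxPlus) (s : Finset ι)
    (f : ι → Fin n → MaxPlus) :
    A.mulVec (∑ i ∈ s, f i) = ∑ i ∈ s, A.mulVec (f i) := by
  classical
  induction s using Finset.induction with
  | empty => simp
  | insert _ _ h ih => rw [Finset.sum_insert h, Finset.sum_insert h, Matrix.mulVec_add, ih]

/-- Solving `x = U x + v` when `U^(p+1) = 0`. -/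
lemma maxplus_solve (U : Matrix (Fin n) (Fin n) MaxPlus) (p : ℕ) (hU : U ^ (p + 1) = 0)
    (v x : Fin n → MaxPlus) :
    x = U.mulVec x + v ↔ x = (∑ q ∈ Finset.range (p + 1), U ^ q).mulVec v := by
  constructor
  · intro hx
    have key : ∀ m : ℕ,
        x = (U ^ m).mulVec x + (∑ q ∈ Finset.range m, U ^ q).mulVec v := by
      intro m
      induction m with
      | zero => simp
      | succ m ih =>
        calc x = (U ^ m).mulVec x + (∑ q ∈ Finset.range m, U ^ q).mulVec v := ih
          _ = (U ^ m).mulVec (U.mulVec x + v) + (∑ q ∈ Finset.range m, U ^ q).mulVec v := by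
              rw [← hx]
          _ = (U ^ (m + 1)).mulVec x + (∑ q ∈ Finset.range (m + 1), U ^ q).mulVec v := by
              rw [Matrix.mulVec_add, Matrix.mulVec_mulVec, ← pow_succ,
                Finset.sum_range_succ, Matrix.add_mulVec]
              ring
    have := key (p + 1)
    rwa [hU, Matrix.zero_mulVec, zero_add] at this
  · intro hx
    rw [hx]
    have hmat : U * (∑ q ∈ Finset.range (p + 1), U ^ q) + 1
        = ∑ q ∈ Finset.range (p + 1), U ^ q := by
      rw [Finset.mul_sum]
      have h1 : ∀ q : ℕ, U * U ^ q = U ^ (q + 1) := fun q => (pow_succ' U q).symm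
      simp only [h1]
      rw [show (1 : Matrix (Fin n) (Fin n) MaxPlus) = U ^ 0 from (pow_zero U).symm]
      rw [← Finset.sum_range_succ' (fun q => U ^ q) (p + 1)]
      rw [Finset.sum_range_succ (fun q => U ^ q) (p + 1), hU, add_zero]
    conv_lhs => rw [← hmat]
    rw [Matrix.add_mulVec, Matrix.one_mulVec, Matrix.mulVec_mulVec]

lemma maxplus_one_ne_zero : (1 : MaxPlus) ≠ 0 := by
  intro h
  have := congrArg Tropical.untrop h
  rw [Tropical.untrop_one, Tropical.untrop_zero] at this
  exact (WithBot.coe_ne_bot (a := (0 : ℝ))) (congrArg OrderDual.ofDual this)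

/-- Nonzero entries of matrix products come from nonzero factors. -/
lemma mul_entry_ne_zero {A B : Matrix (Fin n) (Fin n) MaxPlus} {i j : Fin n}
    (h : (A * B) i j ≠ 0) : ∃ k, A i k ≠ 0 ∧ B k j ≠ 0 := by
  by_contra hc
  push_neg at hc
  apply h
  rw [Matrix.mul_apply]
  apply Finset.sum_eq_zero
  intro k _
  rcases eq_or_ne (A i k) 0 with h0 | h0
  · rw [h0, zero_mul]
  · rw [hc k h0, mul_zero]

/-- Nonzero entries of powers of `Tk * G₀ᵀ` yield walks in the graph of `G₀`. -/
lemma pow_entry_walk (Tk G0 : Matrix (Fin n) (Fin n) MaxPlus)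
    (hToff : ∀ i j : Fin n, i ≠ j → Tk i j = 0) :
    ∀ q (i j : Fin n), ((Tk * G0.transpose) ^ q) i j ≠ 0 → HasWalk G0 q j i := by
  intro q
  induction q with
  | zero =>
    intro i j h
    rw [pow_zero, Matrix.one_apply] at h
    have hij : i = j := by
      by_contra hne
      rw [if_neg hne] at h
      exact h rfl
    subst hij
    exact ⟨fun _ => i, rfl, rfl, fun t => t.elim0⟩
  | succ q ih =>
    intro i j h
    rw [pow_succ'] at h
    obtain ⟨k, hik, hkj⟩ := mul_entry_ne_zero h
    -- (Tk * G0ᵀ) i k ≠ 0 → G0 k i ≠ 0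
    have hedge : G0 k i ≠ 0 := by
      obtain ⟨l, hTl, hGl⟩ := mul_entry_ne_zero hik
      rcases eq_or_ne i l with rfl | hne
      · simpa [Matrix.transpose_apply] using hGl
      · exact absurd (hToff i l hne) hTl
    obtain ⟨f, hf0, hfl, hfe⟩ := ih k j hkj
    refine ⟨Fin.snoc f i, ?_, ?_, ?_⟩
    · rw [show (0 : Fin (q + 2)) = (0 : Fin (q + 1)).castSucc from (Fin.castSucc_zero).symm,
        Fin.snoc_castSucc]
      exact hf0
    · exact Fin.snoc_last _ _
    · intro t
      induction t using Fin.lastCases with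
      | last =>
        rw [show (Fin.last q).succ = Fin.last (q + 1) from rfl, Fin.snoc_last,
          Fin.snoc_castSucc, hfl]
        exact hedge
      | cast s =>
        rw [Fin.succ_castSucc, Fin.snoc_castSucc, Fin.snoc_castSucc]
        exact hfe s

end aux

/-- Explicit solution of the implicit max-plus recursion
`d(k) = 𝒯ₖ ⊗ G₀ᵀ ⊗ d(k) ⊕ 𝒯ₖ ⊗ d(k−1) ⊕ 𝒯ₖ ⊗ Σ_{m=1}^{M} G_mᵀ ⊗ d(k−m)`:
when `𝒯ₖ` is diagonal with non-`ε` diagonal and the graph of `G₀` is acyclic with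
longest path length `p`, a vector `d` satisfies the implicit equation iff
`d = Σ_{m=1}^{M} T_m(k) ⊗ d(k−m)` with
`T₁(k) = (E ⊕ 𝒯ₖ ⊗ G₀ᵀ)^p ⊗ 𝒯ₖ ⊗ (E ⊕ G₁ᵀ)` and
`T_m(k) = (E ⊕ 𝒯ₖ ⊗ G₀ᵀ)^p ⊗ 𝒯ₖ ⊗ G_mᵀ` for `m ≥ 2`.
Here `dp m` stands for the given vector `d(k−(m+1))`, `m = 0, …, M−1`. -/
theorem maxplus_explicit_state_equation {n M p : ℕ} (hM : 0 < M)
    (Tk : Matrix (Fin n) (Fin n) MaxPlus)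
    (hToff : ∀ i j : Fin n, i ≠ j → Tk i j = 0) (hTdiag : ∀ i : Fin n, Tk i i ≠ 0)
    (G : Fin (M + 1) → Matrix (Fin n) (Fin n) MaxPlus)
    (hG01 : ∀ m i j, G m i j = 0 ∨ G m i j = 1)
    (hacyclic : ∀ q > 0, ∀ i, ¬ HasWalk (G 0) q i i)
    (hlongest : ∃ i j, HasWalk (G 0) p i j)
    (hbound : ∀ q i j, HasWalk (G 0) q i j → q ≤ p)
    (dp : Fin M → (Fin n → MaxPlus)) (d : Fin n → MaxPlus) :
    d = (Tk * (G 0).transpose).mulVec d + Tk.mulVec (dp ⟨0, hM⟩)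
          + Tk.mulVec (∑ m : Fin M, ((G m.succ).transpose).mulVec (dp m)) ↔
    d = ∑ m : Fin M,
          (if (m : ℕ) = 0
            then ((1 + Tk * (G 0).transpose) ^ p * Tk * (1 + (G m.succ).transpose))
            else ((1 + Tk * (G 0).transpose) ^ p * Tk * (G m.succ).transpose)).mulVec
            (dp m) := by
  classical
  set U : Matrix (Fin n) (Fin n) MaxPlus := Tk * (G 0).transpose with hUdef
  -- nilpotency of U
  have hnil : U ^ (p + 1) = 0 := by
    ext i j
    by_contra hij
    rw [Matrix.zero_apply] at hij
    exact absurd (hbound _ _ _ (pow_entry_walk Tk (G 0) hToff (p + 1) i j hij))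
      (Nat.not_succ_le_self p)
  set v : Fin n → MaxPlus :=
    Tk.mulVec (dp ⟨0, hM⟩) + Tk.mulVec (∑ m : Fin M, ((G m.succ).transpose).mulVec (dp m))
    with hvdef
  set S : Matrix (Fin n) (Fin n) MaxPlus := ∑ q ∈ Finset.range (p + 1), U ^ q with hSdef
  have hiff : d = U.mulVec d + v ↔ d = S.mulVec v := maxplus_solve U p hnil v d
  rw [add_assoc]
  rw [show (Tk * (G 0).transpose).mulVec d = U.mulVec d from rfl]
  rw [hiff]
  -- it remains to show the explicit expressions agree
  have hW : (1 + U) ^ p = S := maxplus_geom U p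
  have hSv : S.mulVec v
      = (S * Tk).mulVec (dp ⟨0, hM⟩)
        + ∑ m : Fin M, (S * Tk * (G m.succ).transpose).mulVec (dp m) := by
    rw [hvdef, Matrix.mulVec_add, Matrix.mulVec_mulVec]
    congr 1
    rw [mulVec_sum, mulVec_sum]
    refine Finset.sum_congr rfl fun m _ => ?_
    simp [Matrix.mulVec_mulVec, mul_assoc]
  have hRHS : (∑ m : Fin M,
        (if (m : ℕ) = 0
          then ((1 + U) ^ p * Tk * (1 + (G m.succ).transpose))
          else ((1 + U) ^ p * Tk * (G m.succ).transpose)).mulVec (dp m))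
      = (S * Tk).mulVec (dp ⟨0, hM⟩)
        + ∑ m : Fin M, (S * Tk * (G m.succ).transpose).mulVec (dp m) := by
    have hterm : ∀ m : Fin M,
        (if (m : ℕ) = 0
          then ((1 + U) ^ p * Tk * (1 + (G m.succ).transpose))
          else ((1 + U) ^ p * Tk * (G m.succ).transpose)).mulVec (dp m)
        = (if m = (⟨0, hM⟩ : Fin M) then (S * Tk).mulVec (dp m) else 0)
          + (S * Tk * (G m.succ).transpose).mulVec (dp m) := by
      intro m
      rw [hW]
      by_cases hm : m = (⟨0, hM⟩ : Fin M)
      · have h0 : (m : ℕ) = 0 := by rw [hm]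
        rw [if_pos h0, if_pos hm, mul_add, mul_one, Matrix.add_mulVec]
      · have h0 : ¬((m : ℕ) = 0) := fun h => hm (Fin.ext h)
        rw [if_neg h0, if_neg hm, zero_add]
    rw [Finset.sum_congr rfl fun m _ => hterm m, Finset.sum_add_distrib,
      Finset.sum_ite_eq' Finset.univ (⟨0, hM⟩ : Fin M)
        (fun m => (S * Tk).mulVec (dp m)), if_pos (Finset.mem_univ _)]
  rw [hSv, ← hRHS]
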